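/- Let I be an instance with types, γ a signpost sequence, and J ∈ A_γ(Q(I), h). Then there exists an allocation E: C → {0,1} satisfying type parity (A) and, for every party i, Σ_{c∈C_i} E(c) = J_i, if and only if the polytope Z(I, J, γ) is nonempty. -/

import Mathlib

open Finset

/-- A signpost sequence: `γ 0 = 0`, `γ n ∈ [n-1, n]` for `n ≥ 1`, and the
disjunction property. -/
def Signpost (γ : ℕ → ℝ) : Prop :=
  γ 0 = 0 ∧
  (∀ n : ℕ, 1 ≤ n → ((n : ℝ) - 1 ≤ γ n ∧ γ n ≤ n)) ∧
  ((∃ k : ℕ, 2 ≤ k ∧ γ k = (k : ℝ) - 1) → ∀ l : ℕ, 1 ≤ l → γ l < l) ∧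
  ((∃ k : ℕ, 1 ≤ k ∧ γ k = (k : ℝ)) → ∀ l : ℕ, 2 ≤ l → (l : ℝ) - 1 < γ l)

/-- The rounding rule `R_γ` of a signpost sequence, as a set-valued map:
`R_γ(0) = {0}`, `R_γ(t) = {n}` for `t ∈ (γ n, γ (n+1))`, and
`R_γ(t) = {n-1, n}` when `t = γ n > 0`. -/
def roundSet (γ : ℕ → ℝ) (t : ℝ) : Set ℕ :=
  {k | (t = 0 ∧ k = 0) ∨ (γ k < t ∧ t < γ (k + 1)) ∨ (0 < t ∧ (t = γ k ∨ t = γ (k + 1)))}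

/-- The divisor method solution set `A_γ(Q, h)`. -/
def divisorSet (γ : ℕ → ℝ) {n : ℕ} (Q : Fin n → ℝ) (h : ℕ) : Set (Fin n → ℕ) :=
  {S | (∑ i, S i) = h ∧ ∃ lam : ℝ, 0 < lam ∧ ∀ i, S i ∈ roundSet γ (Q i / lam)}

/-- The two candidate types. -/
inductive MType
  | f | m
deriving DecidableEq

instance : Fintype MType :=
  ⟨{MType.f, MType.m}, fun x => by cases x <;> simp⟩

/-- The other type. -/
def MType.other : MType → MType
  | .f => .m
  | .m => .f

/-- An instance of the apportionment problem with type parity: a finite candidate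
set `C`, a party map, a (nonnegative real) vote map, a type map, a house size
`h ≥ 1` and a total order (the field `ord`) refining the votes. -/
structure TypedInstance (n : ℕ) (C : Type) [Fintype C] [DecidableEq C] where
  ord : LinearOrder C
  party : C → Fin n
  votes : C → ℝ
  votes_nonneg : ∀ c, 0 ≤ votes c
  mtype : C → MType
  h : ℕ
  h_pos : 1 ≤ h
  refines : ∀ c c' : C, votes c' < votes c → ord.lt c' c

namespace TypedInstance

variable {n : ℕ} {C : Type} [Fintype C] [DecidableEq C]

/-- The candidates of party `i`. -/
def Ci (I : TypedInstance n C) (i : Fin n) : Finset C :=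
  univ.filter fun c => I.party c = i

/-- The candidates of type `t`. -/
def Ct (I : TypedInstance n C) (t : MType) : Finset C :=
  univ.filter fun c => I.mtype c = t

/-- The candidates of party `i` and type `t`. -/
def Cit (I : TypedInstance n C) (i : Fin n) (t : MType) : Finset C :=
  univ.filter fun c => I.party c = i ∧ I.mtype c = t

/-- The party vote totals `Q(I)`. -/
def Q (I : TypedInstance n C) : Fin n → ℝ := fun i => ∑ c ∈ I.Ci i, I.votes c

/-- The party × type vote totals `P(I)`. -/
def P (I : TypedInstance n C) : Fin n → MType → ℝ := fun i t => ∑ c ∈ I.Cit i t, I.votes c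

/-- The supply matrix `S(I)`. -/
def S (I : TypedInstance n C) : Fin n → MType → ℕ := fun i t => (I.Cit i t).card

/-- The supply condition: `|C_i^t| ≥ ⌈h/2⌉` for every party `i` and type `t`. -/
def SupplyCond (I : TypedInstance n C) : Prop :=
  ∀ (i : Fin n) (t : MType), (I.h + 1) / 2 ≤ (I.Cit i t).card

/-- Type parity condition (A): the numbers of elected candidates of the two types
differ by exactly `h mod 2`. Allocations are represented by the finset of elected
candidates. -/
def CondA (I : TypedInstance n C) (E : Finset C) : Prop :=
  (((E.filter fun c => I.mtype c = MType.f).card : ℤ) -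
    ((E.filter fun c => I.mtype c = MType.m).card : ℤ)).natAbs = I.h % 2

instance (I : TypedInstance n C) (E : Finset C) : Decidable (I.CondA E) := by
  unfold CondA; infer_instance

/-- The number of elected candidates of each party. -/
def partyCount (I : TypedInstance n C) (E : Finset C) : Fin n → ℕ :=
  fun i => (E.filter fun c => I.party c = i).card

/-- The number of elected candidates of each type. -/
def typeCount (I : TypedInstance n C) (E : Finset C) : MType → ℕ :=
  fun t => (E.filter fun c => I.mtype c = t).card

/-- Party proportionality condition (B) w.r.t. a signpost sequence `γ`. -/
def CondB (I : TypedInstance n C) (γ : ℕ → ℝ) (E : Finset C) : Prop :=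
  ∃ J ∈ divisorSet γ I.Q I.h, ∀ i, I.partyCount E i = J i

/-- The set `X(I, γ)` of feasible allocations. -/
def X (I : TypedInstance n C) (γ : ℕ → ℝ) : Set (Finset C) :=
  {E | I.CondA E ∧ I.CondB γ E}

/-- The polytope `Z(I, J, γ)` of fractional allocations. -/
def Z (I : TypedInstance n C) (J : Fin n → ℕ) : Set (Fin n → MType → ℝ) :=
  {y | (∀ t : MType, ((I.h / 2 : ℕ) : ℝ) ≤ ∑ i, y i t) ∧
       (∀ i : Fin n, y i MType.f + y i MType.m = (J i : ℝ)) ∧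
       (∀ (i : Fin n) (t : MType), 0 ≤ y i t ∧ y i t ≤ ((I.Cit i t).card : ℝ))}

/-- The scaled instance `αI` (same candidate order). -/
def scale (I : TypedInstance n C) (α : ℝ) (hα : 0 < α) : TypedInstance n C where
  ord := I.ord
  party := I.party
  votes := fun c => α * I.votes c
  votes_nonneg := fun c => mul_nonneg hα.le (I.votes_nonneg c)
  mtype := I.mtype
  h := I.h
  h_pos := I.h_pos
  refines := fun c c' hlt => I.refines c c' (lt_of_mul_lt_mul_left hlt hα.le)

/-- `G` is a voting increment of `I` in candidate `c`: identical to `I` except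
that `c` garners strictly more votes. -/
def VotingIncrement (I G : TypedInstance n C) (c : C) : Prop :=
  G.party = I.party ∧ G.mtype = I.mtype ∧ G.h = I.h ∧
  I.votes c < G.votes c ∧ ∀ c' : C, c' ≠ c → G.votes c' = I.votes c'

/-- The rank of a candidate in the order `≻`: position `1` is the top candidate. -/
def rank (I : TypedInstance n C) (c : C) : ℕ :=
  letI := I.ord
  (univ.filter fun c' => c ≤ c').card

/-- The top `k` candidates of a subset `D` according to the order of `I`. -/
def topOf (I : TypedInstance n C) (D : Finset C) (k : ℕ) : Finset C :=
  letI := I.ord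
  D.filter fun c => (D.filter fun c' => c ≤ c').card ≤ k

/-- The type-oblivious solution `T_J`: in every party `i`, the top `J i`
candidates of `C_i` are elected. -/
def oblivious (I : TypedInstance n C) (J : Fin n → ℕ) : Finset C :=
  univ.filter fun c => c ∈ I.topOf (I.Ci (I.party c)) (J (I.party c))

/-- The over-represented type of an allocation (type `f` in case of a tie). -/
def overType (I : TypedInstance n C) (E : Finset C) : MType :=
  if I.typeCount E MType.m ≤ I.typeCount E MType.f then MType.f else MType.m

/-- One parity-correction swap: the worst-ranked elected candidate of the
over-represented type is replaced by the best-ranked unelected candidate of the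
same party and of the under-represented type (if any; otherwise nothing happens). -/
def swapStep (I : TypedInstance n C) (E : Finset C) : Finset C :=
  letI := I.ord
  let t := I.overType E
  let elected := E.filter fun c => I.mtype c = t
  if hE : elected.Nonempty then
    let s := elected.min' hE
    let pool := univ.filter fun c => c ∉ E ∧ I.party c = I.party s ∧ I.mtype c = t.other
    if hp : pool.Nonempty then insert (pool.max' hp) (E.erase s) else E
  else E

/-- The parity-correction loop (with fuel). -/
def greedyAux (I : TypedInstance n C) : ℕ → Finset C → Finset C
  | 0, E => E
  | k + 1, E => if I.CondA E then E else greedyAux I k (I.swapStep E)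

/-- The output `E_J` of the greedy & parity correction algorithm. -/
def greedy (I : TypedInstance n C) (J : Fin n → ℕ) : Finset C :=
  greedyAux I I.h (I.oblivious J)

/-- The greedy & parity correction mechanism `M^G`. -/
def MG (I : TypedInstance n C) (γ : ℕ → ℝ) : Set (Finset C) :=
  {E | ∃ J ∈ divisorSet γ I.Q I.h, E = I.greedy J}

/-- Two allocations agree on all candidates of rank at most `l`. -/
def agreeUpTo (I : TypedInstance n C) (E₁ E₂ : Finset C) (l : ℕ) : Prop :=
  ∀ c : C, I.rank c ≤ l → (c ∈ E₁ ↔ c ∈ E₂)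

instance (I : TypedInstance n C) (E₁ E₂ : Finset C) (l : ℕ) :
    Decidable (I.agreeUpTo E₁ E₂ l) := by
  unfold agreeUpTo; infer_instance

/-- The length of the common prefix of two allocations (w.r.t. the ranking). -/
def prefixLen (I : TypedInstance n C) (E₁ E₂ : Finset C) : ℕ :=
  ((Finset.range (Fintype.card C + 1)).filter fun l => I.agreeUpTo E₁ E₂ l).sup id

/-- The vote-leading type (type `f` in case of a tie; this tie-breaking rule is
scaling invariant). -/
noncomputable def voteLeading (I : TypedInstance n C) : MType :=
  if (∑ c ∈ I.Ct MType.f, I.votes c) < (∑ c ∈ I.Ct MType.m, I.votes c) then MType.m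
  else MType.f

/-- The parity marginal `φ(I)`: for even `h` both types get `h/2`; for odd `h` the
vote-leading type gets `⌈h/2⌉`. -/
noncomputable def parityMarginal (I : TypedInstance n C) : MType → ℕ :=
  fun t => if t = I.voteLeading then (I.h + 1) / 2 else I.h / 2

end TypedInstance

/-- `(x, lam, mu)` is a `δ`-biproportional solution of the two-dimensional
instance with supply `(P, S, J, φ)`. -/
def IsBipropSol (δ : ℕ → ℝ) {n : ℕ} (P : Fin n → MType → ℝ) (S : Fin n → MType → ℕ)
    (J : Fin n → ℕ) (φ : MType → ℕ) (x : Fin n → MType → ℕ)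
    (lam : Fin n → ℝ) (mu : MType → ℝ) : Prop :=
  (∀ i, 0 < lam i) ∧ (∀ t, 0 < mu t) ∧
  (∀ (i : Fin n) (t : MType), x i t < S i t → x i t ∈ roundSet δ (P i t * lam i * mu t)) ∧
  (∀ i : Fin n, x i MType.f + x i MType.m = J i) ∧
  (∀ t : MType, (∑ i, x i t) = φ t) ∧
  (∀ (i : Fin n) (t : MType), x i t ≤ S i t)

/-- The set `B_δ(P, S, J, φ)` of `δ`-biproportional solutions. -/
def bipropSet (δ : ℕ → ℝ) {n : ℕ} (P : Fin n → MType → ℝ) (S : Fin n → MType → ℕ)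
    (J : Fin n → ℕ) (φ : MType → ℕ) : Set (Fin n → MType → ℕ) :=
  {x | ∃ lam mu, IsBipropSol δ P S J φ x lam mu}

/-- `δ`-biproportional solutions of a two-dimensional instance `(P, J, φ)`
without supply bounds. -/
def IsBipropSolNS (δ : ℕ → ℝ) {n : ℕ} (P : Fin n → MType → ℝ)
    (J : Fin n → ℕ) (φ : MType → ℕ) (x : Fin n → MType → ℕ)
    (lam : Fin n → ℝ) (mu : MType → ℝ) : Prop :=
  (∀ i, 0 < lam i) ∧ (∀ t, 0 < mu t) ∧
  (∀ (i : Fin n) (t : MType), x i t ∈ roundSet δ (P i t * lam i * mu t)) ∧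
  (∀ i : Fin n, x i MType.f + x i MType.m = J i) ∧
  (∀ t : MType, (∑ i, x i t) = φ t)

/-- The set `B_δ(P, J, φ)` for instances without supply bounds. -/
def bipropSetNS (δ : ℕ → ℝ) {n : ℕ} (P : Fin n → MType → ℝ)
    (J : Fin n → ℕ) (φ : MType → ℕ) : Set (Fin n → MType → ℕ) :=
  {x | ∃ lam mu, IsBipropSolNS δ P J φ x lam mu}

/-- `F` is a fair share (matrix scaling) of the two-dimensional instance
`(P, J, φ)`. -/
def IsFairShare {n : ℕ} (P : Fin n → MType → ℝ) (J : Fin n → ℕ) (φ : MType → ℕ)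
    (F : Fin n → MType → ℝ) : Prop :=
  ∃ (lam : Fin n → ℝ) (mu : MType → ℝ),
    (∀ i, 0 < lam i) ∧ (∀ t, 0 < mu t) ∧ (∀ i t, 0 < F i t) ∧
    (∀ (i : Fin n) (t : MType), F i t = P i t * lam i * mu t) ∧
    (∀ i : Fin n, F i MType.f + F i MType.m = (J i : ℝ)) ∧
    (∀ t : MType, (∑ i, F i t) = (φ t : ℝ))

namespace TypedInstance

variable {n : ℕ} {C : Type} [Fintype C] [DecidableEq C]

/-- The allocation `E_x` electing, for every party `i` and type `t`, the top
`x i t` candidates of `C_i^t`. -/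
def allocOf (I : TypedInstance n C) (x : Fin n → MType → ℕ) : Finset C :=
  univ.filter fun c =>
    c ∈ I.topOf (I.Cit (I.party c) (I.mtype c)) (x (I.party c) (I.mtype c))

/-- The `δ`-biproportional parity mechanism `M^B_δ`. -/
def MB (I : TypedInstance n C) (δ γ : ℕ → ℝ) : Set (Finset C) :=
  {E | ∃ J ∈ divisorSet γ I.Q I.h,
        ∃ x ∈ bipropSet δ I.P I.S J I.parityMarginal, E = I.allocOf x}

end TypedInstance
section Stmt3Aux
open Finset
variable {n : ℕ} {C : Type} [Fintype C] [DecidableEq C]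

lemma chooseSum {n : ℕ} : ∀ (d : ℕ) (L U : Fin n → ℕ), (∀ i, L i ≤ U i) →
    (∑ i, L i) + d ≤ ∑ i, U i →
    ∃ z : Fin n → ℕ, (∀ i, L i ≤ z i ∧ z i ≤ U i) ∧ (∑ i, z i) = (∑ i, L i) + d := by
  intro d
  induction d with
  | zero => intro L U hLU _; exact ⟨L, fun i => ⟨le_rfl, hLU i⟩, by simp⟩
  | succ d ih =>
    intro L U hLU hsum
    have hlt : ∑ i, L i < ∑ i, U i := by omega
    have : ∃ i, L i < U i := by
      by_contra hc
      push_neg at hc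
      exact absurd hlt (not_lt.mpr (Finset.sum_le_sum fun i _ => hc i))
    obtain ⟨i, hi⟩ := this
    set L' := Function.update L i (L i + 1) with hL'
    have hsumL' : (∑ j, L' j) = (∑ j, L j) + 1 := by
      rw [hL', Finset.sum_update_of_mem (Finset.mem_univ i)]
      rw [← Finset.add_sum_erase _ L (Finset.mem_univ i)]
      simp [Finset.sdiff_singleton_eq_erase]
      ring
    have hL'U : ∀ j, L' j ≤ U j := by
      intro j
      rcases eq_or_ne j i with rfl | hne
      · simpa [hL'] using hi
      · simp [hL', Function.update_of_ne hne]; exact hLU j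
    obtain ⟨z, hz1, hz2⟩ := ih L' U hL'U (by omega)
    refine ⟨z, fun j => ⟨?_, (hz1 j).2⟩, by omega⟩
    rcases eq_or_ne j i with rfl | hne
    · have := (hz1 j).1; simp [hL'] at this; omega
    · have := (hz1 j).1; rwa [hL', Function.update_of_ne hne] at this

lemma sum_card_pt (I : TypedInstance n C) (E : Finset C) (t : MType) :
    (∑ i, (E.filter fun c => I.party c = i ∧ I.mtype c = t).card)
      = (E.filter fun c => I.mtype c = t).card := by
  simp only [Finset.card_filter]
  rw [Finset.sum_comm]
  refine Finset.sum_congr rfl fun c _ => ?_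
  by_cases hc : I.mtype c = t <;> simp [hc]

lemma card_split_type (I : TypedInstance n C) (E : Finset C) (i : Fin n) :
    (E.filter fun c => I.party c = i ∧ I.mtype c = MType.f).card
      + (E.filter fun c => I.party c = i ∧ I.mtype c = MType.m).card
      = (E.filter fun c => I.party c = i).card := by
  simp only [Finset.card_filter, ← Finset.sum_add_distrib]
  refine Finset.sum_congr rfl fun c _ => ?_
  cases ht : I.mtype c <;> by_cases hp : I.party c = i <;> simp [ht, hp]

lemma sum_card_party (I : TypedInstance n C) (E : Finset C) :
    (∑ i, (E.filter fun c => I.party c = i).card) = E.card := by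
  rw [Finset.card_eq_sum_ones E]
  simp only [Finset.card_filter]
  rw [Finset.sum_comm]
  refine Finset.sum_congr rfl fun c _ => ?_
  simp

lemma card_split_mt (I : TypedInstance n C) (E : Finset C) :
    (E.filter fun c => I.mtype c = MType.f).card
      + (E.filter fun c => I.mtype c = MType.m).card = E.card := by
  rw [Finset.card_eq_sum_ones E]
  simp only [Finset.card_filter, ← Finset.sum_add_distrib]
  refine Finset.sum_congr rfl fun c _ => ?_
  cases ht : I.mtype c <;> simp [ht]

end Stmt3Aux

/-- feasibility is equivalent to nonemptiness of the polytope `Z(I, J, γ)`. -/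
theorem stmt3 {n : ℕ} {C : Type} [Fintype C] [DecidableEq C]
    (γ : ℕ → ℝ) (hγ : Signpost γ) (I : TypedInstance n C)
    (J : Fin n → ℕ) (hJ : J ∈ divisorSet γ I.Q I.h) :
    (∃ E : Finset C, I.CondA E ∧ ∀ i, I.partyCount E i = J i) ↔ (I.Z J).Nonempty := by
  have hJh : (∑ i, J i) = I.h := hJ.1
  constructor
  · rintro ⟨E, hA, hPC⟩
    have hEcard : E.card = I.h := by
      rw [← sum_card_party I E, ← hJh]
      exact Finset.sum_congr rfl fun i _ => hPC i
    have hab := card_split_mt I E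
    have hA' : (((E.filter fun c => I.mtype c = MType.f).card : ℤ)
        - ((E.filter fun c => I.mtype c = MType.m).card : ℤ)).natAbs = I.h % 2 := hA
    have haf : I.h / 2 ≤ (E.filter fun c => I.mtype c = MType.f).card := by omega
    have ham : I.h / 2 ≤ (E.filter fun c => I.mtype c = MType.m).card := by omega
    refine ⟨fun i t => ((E.filter fun c => I.party c = i ∧ I.mtype c = t).card : ℝ),
      ?_, ?_, ?_⟩
    · intro t
      rw [← Nat.cast_sum]
      rw [Nat.cast_le, sum_card_pt I E t]
      cases t
      · exact haf
      · exact ham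
    · intro i
      have h1 : (E.filter fun c => I.party c = i ∧ I.mtype c = MType.f).card
          + (E.filter fun c => I.party c = i ∧ I.mtype c = MType.m).card = J i := by
        rw [card_split_type I E i]; exact hPC i
      show (((E.filter fun c => I.party c = i ∧ I.mtype c = MType.f).card : ℝ))
          + (((E.filter fun c => I.party c = i ∧ I.mtype c = MType.m).card : ℝ))
          = (J i : ℝ)
      exact_mod_cast h1
    · intro i t
      refine ⟨Nat.cast_nonneg _, Nat.cast_le.mpr (Finset.card_le_card ?_)⟩
      intro c hc
      simp only [Finset.mem_filter] at hc
      simp only [TypedInstance.Cit, Finset.mem_filter, Finset.mem_univ, true_and]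
      exact hc.2
  · rintro ⟨y, hy1, hy2, hy3⟩
    set L : Fin n → ℕ := fun i => J i - (I.Cit i MType.m).card with hLdef
    set U : Fin n → ℕ := fun i => min (J i) ((I.Cit i MType.f).card) with hUdef
    have hyL : ∀ i, (L i : ℝ) ≤ y i MType.f := by
      intro i
      have h2 := hy2 i
      have hm2 := (hy3 i MType.m).2
      have hf1 := (hy3 i MType.f).1
      rcases le_total (J i) ((I.Cit i MType.m).card) with h | h
      · simp only [hLdef, Nat.sub_eq_zero_of_le h, Nat.cast_zero]
        exact hf1
      · have hc : ((L i : ℕ) : ℝ) = (J i : ℝ) - ((I.Cit i MType.m).card : ℝ) := by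
          simp only [hLdef]; rw [Nat.cast_sub h]
        rw [hc]; linarith
    have hyU : ∀ i, y i MType.f ≤ (U i : ℝ) := by
      intro i
      have h2 := hy2 i
      have hm1 := (hy3 i MType.m).1
      have hf2 := (hy3 i MType.f).2
      simp only [hUdef, Nat.cast_min]
      exact le_min (by linarith) hf2
    have hLU : ∀ i, L i ≤ U i := fun i => by exact_mod_cast (hyL i).trans (hyU i)
    have hsum_yf_ub : (∑ i, y i MType.f) ≤ (I.h : ℝ) - ((I.h / 2 : ℕ) : ℝ) := by
      have h1 := hy1 MType.m
      have h2 : (∑ i, (y i MType.f + y i MType.m)) = (I.h : ℝ) := by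
        rw [Finset.sum_congr rfl fun i _ => hy2 i, ← Nat.cast_sum, hJh]
      rw [Finset.sum_add_distrib] at h2
      linarith
    have hsumL : (∑ i, L i) ≤ I.h - I.h / 2 := by
      have hre : ((∑ i, L i : ℕ) : ℝ) ≤ (I.h : ℝ) - ((I.h / 2 : ℕ) : ℝ) := by
        rw [Nat.cast_sum]
        exact le_trans (Finset.sum_le_sum fun i _ => hyL i) hsum_yf_ub
      rw [← Nat.cast_sub (Nat.div_le_self _ _)] at hre
      exact_mod_cast hre
    have hsumU : I.h / 2 ≤ ∑ i, U i := by
      have hre : ((I.h / 2 : ℕ) : ℝ) ≤ ((∑ i, U i : ℕ) : ℝ) := by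
        rw [Nat.cast_sum]
        exact le_trans (hy1 MType.f) (Finset.sum_le_sum fun i _ => hyU i)
      exact_mod_cast hre
    have hsumLU : (∑ i, L i) ≤ ∑ i, U i := Finset.sum_le_sum fun i _ => hLU i
    set T := max (I.h / 2) (∑ i, L i) with hT
    have hT2 : T ≤ ∑ i, U i := max_le hsumU hsumLU
    have hT3 : I.h / 2 ≤ T := le_max_left _ _
    have hT4 : T ≤ I.h - I.h / 2 := max_le (by omega) hsumL
    obtain ⟨zf, hzf1, hzf2⟩ := chooseSum (T - ∑ i, L i) L U hLU (by omega)
    have hzfT : (∑ i, zf i) = T := by omega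
    have hzfJ : ∀ i, zf i ≤ J i := fun i => le_trans (hzf1 i).2 (min_le_left _ _)
    have hzfSf : ∀ i, zf i ≤ (I.Cit i MType.f).card :=
      fun i => le_trans (hzf1 i).2 (min_le_right _ _)
    have hzmSm : ∀ i, J i - zf i ≤ (I.Cit i MType.m).card := by
      intro i
      have h1 := (hzf1 i).1
      simp only [hLdef] at h1
      omega
    have hsumJE : (∑ i, (zf i + (J i - zf i))) = I.h := by
      rw [Finset.sum_congr rfl fun i _ => Nat.add_sub_cancel' (hzfJ i)]
      exact hJh
    have hsumzm : (∑ i, (J i - zf i)) = I.h - T := by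
      rw [Finset.sum_add_distrib] at hsumJE
      omega
    have hzS : ∀ p : Fin n × MType,
        (match p.2 with | MType.f => zf p.1 | MType.m => J p.1 - zf p.1)
          ≤ (I.Cit p.1 p.2).card := by
      rintro ⟨i, t⟩
      cases t
      · exact hzfSf i
      · exact hzmSm i
    have hex : ∀ p : Fin n × MType, ∃ s ⊆ I.Cit p.1 p.2,
        s.card = (match p.2 with | MType.f => zf p.1 | MType.m => J p.1 - zf p.1) :=
      fun p => Finset.exists_subset_card_eq (hzS p)
    choose f hf1 hf2 using hex
    set E := Finset.univ.biUnion (fun p : Fin n × MType => f p) with hE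
    have hmemCit : ∀ (p : Fin n × MType), ∀ c ∈ f p,
        I.party c = p.1 ∧ I.mtype c = p.2 := by
      intro p c hc
      have := hf1 p hc
      simpa [TypedInstance.Cit] using this
    have hEf : ∀ p : Fin n × MType,
        (E.filter fun c => I.party c = p.1 ∧ I.mtype c = p.2) = f p := by
      intro p
      ext c
      simp only [Finset.mem_filter, hE, Finset.mem_biUnion, Finset.mem_univ, true_and]
      constructor
      · rintro ⟨⟨q, hq⟩, h1, h2⟩
        obtain ⟨e1, e2⟩ := hmemCit q c hq
        have hqp : q = p := by
          obtain ⟨q1, q2⟩ := q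
          obtain ⟨p1, p2⟩ := p
          simp only [Prod.mk.injEq]
          exact ⟨e1.symm.trans h1, e2.symm.trans h2⟩
        rw [← hqp]
        exact hq
      · intro hc
        exact ⟨⟨p, hc⟩, (hmemCit p c hc).1, (hmemCit p c hc).2⟩
    have hcf : ∀ i : Fin n,
        (E.filter fun c => I.party c = i ∧ I.mtype c = MType.f).card = zf i := by
      intro i
      have h1 : (E.filter fun c => I.party c = i ∧ I.mtype c = MType.f)
          = f (i, MType.f) := hEf (i, MType.f)
      rw [h1]
      exact hf2 (i, MType.f)
    have hcm : ∀ i : Fin n,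
        (E.filter fun c => I.party c = i ∧ I.mtype c = MType.m).card
          = J i - zf i := by
      intro i
      have h1 : (E.filter fun c => I.party c = i ∧ I.mtype c = MType.m)
          = f (i, MType.m) := hEf (i, MType.m)
      rw [h1]
      exact hf2 (i, MType.m)
    have haf : (E.filter fun c => I.mtype c = MType.f).card = T := by
      rw [← sum_card_pt I E MType.f,
        Finset.sum_congr rfl fun i _ => hcf i]
      exact hzfT
    have ham : (E.filter fun c => I.mtype c = MType.m).card = I.h - T := by
      rw [← sum_card_pt I E MType.m,
        Finset.sum_congr rfl fun i _ => hcm i]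
      exact hsumzm
    refine ⟨E, ?_, ?_⟩
    · show (((E.filter fun c => I.mtype c = MType.f).card : ℤ)
        - ((E.filter fun c => I.mtype c = MType.m).card : ℤ)).natAbs = I.h % 2
      rw [haf, ham]
      omega
    · intro i
      show (E.filter fun c => I.party c = i).card = J i
      rw [← card_split_type I E i, hcf i, hcm i]
      have := hzfJ i
      omega
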